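/- In the toy crossover environment with N = 1 and K > 0, the posterior after a comparison between c⁺ and c⁻ has strictly lower expected Shannon entropy than the posterior after a demonstration (free choice among all 2(K+1) options), for every β > 0. Specifically, with a uniform prior over {θ⁺, θ⁻}, the comparison posterior entropy is H₂(σ(2βR₁)) (entropy of a Bernoulli with parameter σ(2βR₁)), which is strictly less than the expected posterior entropy of the demonstration, which mixes H₂(σ(2βR₁)) (with probability of an extreme choice) and H₂(σ(2βR₂)) (with probability of a conservative choice), since R₁ > R₂ > 0 implies H₂(σ(2βR₁)) < H₂(σ(2βR₂)) and the conservative choice has positive probability. -/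

import Mathlib

open Real

/-- Logistic sigmoid. -/
noncomputable def sigm (x : ℝ) : ℝ := 1 / (1 + Real.exp (-x))

/-- Binary entropy. -/
noncomputable def H2 (p : ℝ) : ℝ := -p * Real.log p - (1 - p) * Real.log (1 - p)

lemma H2_eq_binEntropy (p : ℝ) : H2 p = Real.binEntropy p := by
  simp [H2, Real.binEntropy, Real.log_inv]; ring

lemma sigm_mem (x : ℝ) (hx : 0 < x) : sigm x ∈ Set.Icc (2⁻¹ : ℝ) 1 := by
  have h1 : Real.exp (-x) < 1 := by
    rw [Real.exp_lt_one_iff]; linarith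
  have h0 : 0 < Real.exp (-x) := Real.exp_pos _
  constructor
  · rw [sigm, le_div_iff₀ (by linarith)]; linarith
  · rw [sigm, div_le_one (by linarith)]; linarith

lemma sigm_lt (x y : ℝ) (h : x < y) : sigm x < sigm y := by
  have h0x : 0 < Real.exp (-x) := Real.exp_pos _
  have h0y : 0 < Real.exp (-y) := Real.exp_pos _
  have : Real.exp (-y) < Real.exp (-x) := Real.exp_lt_exp.2 (by linarith)
  rw [sigm, sigm, div_lt_div_iff₀ (by linarith) (by linarith)]
  linarith

/-- Toy crossover environment with `N = 1` and `K ≥ 1`: two hypotheses `θ⁺, θ⁻` with uniform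
prior; extreme choices `c⁺, c⁻` with rewards `±R₁` and `2K` conservative choices with rewards
`±R₂`, where `R₁ > R₂ > 0`.  Under the Boltzmann model with `β > 0` (true hypothesis `θ⁺`,
and symmetrically for `θ⁻`), the comparison between `c⁺` and `c⁻` yields posterior entropy
`H₂(σ(2βR₁))`, which is strictly smaller than the expected posterior entropy of a
demonstration (a free Boltzmann choice among all `2(K+1)` options), which equals
`pExt · H₂(σ(2βR₁)) + pCons · H₂(σ(2βR₂))` where `pExt` (resp. `pCons`) is the probability of
making an extreme (resp. conservative) choice. -/
theorem stmt15 (K : ℕ) (hK : 1 ≤ K) (R1 R2 β : ℝ) (hR12 : R2 < R1) (hR2 : 0 < R2)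
    (hβ : 0 < β) :
    H2 (sigm (2 * β * R1)) <
      ((Real.exp (β * R1) + Real.exp (-(β * R1))) /
          (Real.exp (β * R1) + Real.exp (-(β * R1)) +
            K * (Real.exp (β * R2) + Real.exp (-(β * R2))))) * H2 (sigm (2 * β * R1)) +
        ((K * (Real.exp (β * R2) + Real.exp (-(β * R2)))) /
          (Real.exp (β * R1) + Real.exp (-(β * R1)) +
            K * (Real.exp (β * R2) + Real.exp (-(β * R2))))) * H2 (sigm (2 * β * R2)) := by
  set A := Real.exp (β * R1) + Real.exp (-(β * R1)) with hA
  set B := (K : ℝ) * (Real.exp (β * R2) + Real.exp (-(β * R2))) with hB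
  have hApos : 0 < A := by positivity
  have hK1 : (1 : ℝ) ≤ (K : ℝ) := by exact_mod_cast hK
  have hBpos : 0 < B := by
    have : 0 < Real.exp (β * R2) + Real.exp (-(β * R2)) := by positivity
    nlinarith
  have hH : H2 (sigm (2 * β * R1)) < H2 (sigm (2 * β * R2)) := by
    rw [H2_eq_binEntropy, H2_eq_binEntropy]
    exact Real.binEntropy_strictAntiOn (sigm_mem _ (by nlinarith)) (sigm_mem _ (by nlinarith))
      (sigm_lt _ _ (by nlinarith))
  rw [div_mul_eq_mul_div, div_mul_eq_mul_div, ← add_div, lt_div_iff₀ (by linarith)]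
  nlinarith
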